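/- For every real x with 0 ≤ x ≤ 1, the Choi matrix of Λ_x, namely the 9×9 complex matrix J(Λ_x) = Σ_{i,j∈{1,2,3}} E_{ij} ⊗ Λ_x(E_{ij}) (Kronecker product, where E_{ij} = |i⟩⟨j| is the matrix unit), is positive semidefinite; i.e., Λ_x is completely positive. -/

import Mathlib

set_option maxRecDepth 4000

open Matrix Kronecker
open scoped ComplexOrder

/-- The interpolated Landau–Streater/Werner–Holevo channel
`Λ_x(ρ) = (1−x)·ρ + (x/2)·(Tr(ρ)·I₃ − ρᵀ)`. -/
noncomputable def Lam (x : ℝ) (ρ : Matrix (Fin 3) (Fin 3) ℂ) : Matrix (Fin 3) (Fin 3) ℂ :=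
  ((1 : ℂ) - (x : ℂ)) • ρ + ((x : ℂ) / 2) • (ρ.trace • (1 : Matrix (Fin 3) (Fin 3) ℂ) - ρᵀ)

/-- The Choi matrix `J(Λ_x) = Σ_{i,j} E_{ij} ⊗ Λ_x(E_{ij})`. -/
noncomputable def choi (x : ℝ) : Matrix (Fin 3 × Fin 3) (Fin 3 × Fin 3) ℂ :=
  ∑ i : Fin 3, ∑ j : Fin 3,
    (Matrix.single i j (1 : ℂ)) ⊗ₖ Lam x (Matrix.single i j (1 : ℂ))

/-- A nonnegative complex scalar multiple of a PSD matrix is PSD. -/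
private lemma psd_smul {n : Type*} [Fintype n] {c : ℂ} (hc : 0 ≤ c)
    {M : Matrix n n ℂ} (hM : M.PosSemidef) : (c • M).PosSemidef := by
  have hcs : star c = c := by
    have := Complex.conj_eq_iff_im.mpr (Complex.le_def.mp hc).2.symm
    simpa using this
  refine ⟨?_, fun v => ?_⟩
  · unfold Matrix.IsHermitian
    rw [Matrix.conjTranspose_smul, hM.1.eq, hcs]
  · rw [show (v.sum fun i xi => v.sum fun j xj => star xi * (c • M) i j * xj) =
        c * (v.sum fun i xi => v.sum fun j xj => star xi * M i j * xj) from by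
      simp only [Finsupp.sum, Finset.mul_sum, Matrix.smul_apply, smul_eq_mul]
      exact Finset.sum_congr rfl fun i _ => Finset.sum_congr rfl fun j _ => by ring]
    exact mul_nonneg hc (hM.2 v)

/-- The "maximally entangled" rank-one part. -/
private noncomputable def M1 : Matrix (Fin 3 × Fin 3) (Fin 3 × Fin 3) ℂ :=
  Matrix.of fun p q =>
    (if p.1 = p.2 then (1 : ℂ) else 0) * (if q.1 = q.2 then (1 : ℂ) else 0)

/-- The swap matrix. -/
private noncomputable def Sw : Matrix (Fin 3 × Fin 3) (Fin 3 × Fin 3) ℂ :=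
  Matrix.of fun p q => if q = Prod.swap p then (1 : ℂ) else 0

private lemma M1_posSemidef : M1.PosSemidef := by
  have : M1 = (Matrix.of fun (_ : Fin 1) (p : Fin 3 × Fin 3) =>
      (if p.1 = p.2 then (1 : ℂ) else 0))ᴴ *
      (Matrix.of fun (_ : Fin 1) (p : Fin 3 × Fin 3) =>
      (if p.1 = p.2 then (1 : ℂ) else 0)) := by
    ext p q
    simp [M1, Matrix.mul_apply, Fin.sum_univ_one, apply_ite (star : ℂ → ℂ)]
  rw [this]
  exact Matrix.posSemidef_conjTranspose_mul_self _

private lemma Sw_herm : Swᴴ = Sw := by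
  ext p q
  simp only [Sw, Matrix.conjTranspose_apply, Matrix.of_apply, apply_ite (star : ℂ → ℂ),
    star_one, star_zero]
  by_cases h : q = Prod.swap p
  · subst h; simp
  · rw [if_neg h, if_neg (fun hp => h (by rw [hp, Prod.swap_swap]))]

private lemma Sw_mul_Sw : Sw * Sw = 1 := by
  ext p q
  simp only [Sw, Matrix.mul_apply, Matrix.one_apply, Matrix.of_apply,
    show ∀ y : Fin 3 × Fin 3, (q = y.swap) = (y = q.swap) from
      fun y => by rw [eq_comm (a := q), Prod.swap_eq_iff_eq_swap]]
  rw [Finset.sum_eq_single (Prod.swap p)]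
  · by_cases h : p = q
    · subst h; simp
    · rw [if_neg h, if_pos rfl, one_mul,
        if_neg (fun hs => h (Prod.swap_injective hs)), ]
  · intro b _ hb
    rw [if_neg hb, zero_mul]
  · simp

private lemma one_sub_Sw_posSemidef : ((1 : Matrix (Fin 3 × Fin 3) (Fin 3 × Fin 3) ℂ) - Sw).PosSemidef := by
  have key : (1 - Sw) = ((1 : ℂ)/2) • (((1 : Matrix (Fin 3 × Fin 3) (Fin 3 × Fin 3) ℂ) - Sw)ᴴ * (1 - Sw)) := by
    rw [Matrix.conjTranspose_sub, Sw_herm, Matrix.conjTranspose_one,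
      Matrix.sub_mul, Matrix.mul_sub, Matrix.mul_sub, Sw_mul_Sw, one_mul, mul_one]
    ext p q
    simp [Matrix.sub_apply, Matrix.smul_apply]
    ring
  rw [key]
  refine psd_smul (by norm_num [Complex.le_def]) (Matrix.posSemidef_conjTranspose_mul_self _)

private lemma choi_apply (x : ℝ) (a b c d : Fin 3) : choi x (a,b) (c,d) =
    (1 - (x:ℂ)) * ((if a = b then 1 else 0) * (if c = d then 1 else 0)) +
    ((x:ℂ)/2) * ((if (a,b) = (c,d) then (1:ℂ) else 0) - (if (c,d) = Prod.swap (a,b) then 1 else 0)) := by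
  simp [choi, Lam, Matrix.sum_apply, kroneckerMap_apply, Matrix.single, Matrix.one_apply,
    Matrix.trace, Matrix.diag, ite_and, Finset.mul_sum, Finset.sum_ite_eq, Finset.sum_ite_eq',
    Prod.ext_iff, Prod.swap]
  rw [apply_ite (fun M : Matrix (Fin 3) (Fin 3) ℂ => M b d)]
  simp [Matrix.one_apply]
  fin_cases a <;> fin_cases b <;> fin_cases c <;> fin_cases d <;> norm_num [Fin.ext_iff]

private lemma choi_eq (x : ℝ) :
    choi x = (1 - (x:ℂ)) • M1 + ((x:ℂ)/2) • ((1 : Matrix (Fin 3 × Fin 3) (Fin 3 × Fin 3) ℂ) - Sw) := by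
  ext ⟨a,b⟩ ⟨c,d⟩
  rw [choi_apply]
  simp [M1, Sw, Matrix.one_apply, Matrix.add_apply, Matrix.smul_apply, Matrix.sub_apply]

/-- For `0 ≤ x ≤ 1`, the Choi matrix of `Λ_x` is positive semidefinite;
i.e., `Λ_x` is completely positive. -/
theorem lam_choi_posSemidef (x : ℝ) (hx0 : 0 ≤ x) (hx1 : x ≤ 1) :
    (choi x).PosSemidef := by
  rw [choi_eq]
  have h1 : (0:ℂ) ≤ 1 - (x:ℂ) := by
    rw [Complex.le_def]
    constructor <;> simp [sub_nonneg, hx1]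
  have h2 : (0:ℂ) ≤ (x:ℂ)/2 := by
    rw [Complex.le_def]
    constructor <;> simp [hx0]
    positivity
  exact (psd_smul h1 M1_posSemidef).add (psd_smul h2 one_sub_Sw_posSemidef)
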